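/- Let Dom ⊆ ℝ^p be a convex closed set, let ψ : ℝ^p → ℝ be differentiable and σ-strongly convex with σ > 0, and let h : Dom → ℝ be convex such that at every x ∈ Dom there exists a subgradient of h of Euclidean norm at most G_h > 0. Fix z ∈ Dom and let y be the (unique) minimizer over x ∈ Dom of h(x) + D_ψ(x,z). Then there exists a subgradient g of h at y such that for all x ∈ Dom: ⟨y − x, g⟩ ≤ D_ψ(x,z) − D_ψ(x,y) − D_ψ(y,z). -/

import Mathlib

open scoped RealInnerProductSpace

noncomputable section

/-- Bregman divergence generated by `ψ` with gradient map `ψ'`. -/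
def breg {d : ℕ} (ψ : EuclideanSpace ℝ (Fin d) → ℝ)
    (ψ' : EuclideanSpace ℝ (Fin d) → EuclideanSpace ℝ (Fin d))
    (x y : EuclideanSpace ℝ (Fin d)) : ℝ :=
  ψ x - ψ y - ⟪ψ' y, x - y⟫

lemma slope_tendsto {d : ℕ} (ψ : EuclideanSpace ℝ (Fin d) → ℝ)
    (g y w : EuclideanSpace ℝ (Fin d)) (hg : HasGradientAt ψ g y) :
    Filter.Tendsto (fun t : ℝ => (ψ (y + t • w) - ψ y) / t)
      (nhdsWithin 0 (Set.Ioi 0)) (nhds ⟪g, w⟫) := by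
  have hline : HasDerivAt (fun t : ℝ => y + t • w) w 0 := by
    simpa using ((hasDerivAt_id (0:ℝ)).smul_const w).const_add y
  have hcomp : HasDerivAt (fun t : ℝ => ψ (y + t • w)) ⟪g, w⟫ 0 := by
    have hg' : HasFDerivAt ψ ((InnerProductSpace.toDual ℝ (EuclideanSpace ℝ (Fin d))) g)
        (y + (0:ℝ) • w) := by simpa using hg.hasFDerivAt
    have := hg'.comp_hasDerivAt 0 hline
    simp at this
    exact this
  have := hasDerivAt_iff_tendsto_slope.1 hcomp
  have h2 := this.mono_left (nhdsWithin_mono _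
    (by intro t ht; exact ne_of_gt ht : Set.Ioi (0:ℝ) ⊆ {(0:ℝ)}ᶜ))
  refine h2.congr (fun t => ?_)
  simp [slope_def_field, div_eq_inv_mul]

theorem statement_0 {d : ℕ} (Dom : Set (EuclideanSpace ℝ (Fin d)))
    (hDconv : Convex ℝ Dom) (hDclosed : IsClosed Dom)
    (ψ : EuclideanSpace ℝ (Fin d) → ℝ)
    (ψ' : EuclideanSpace ℝ (Fin d) → EuclideanSpace ℝ (Fin d))
    (hψ : ∀ u, HasGradientAt ψ (ψ' u) u)
    (σ : ℝ) (hσ : 0 < σ)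
    (hstrong : ∀ u v, ψ v + ⟪ψ' v, u - v⟫ + σ / 2 * ‖u - v‖ ^ 2 ≤ ψ u)
    (h : EuclideanSpace ℝ (Fin d) → ℝ) (hconv : ConvexOn ℝ Dom h)
    (Gh : ℝ) (hGh : 0 < Gh)
    (hsub : ∀ u ∈ Dom, ∃ gu : EuclideanSpace ℝ (Fin d),
      ‖gu‖ ≤ Gh ∧ ∀ v ∈ Dom, h u + ⟪gu, v - u⟫ ≤ h v)
    (z : EuclideanSpace ℝ (Fin d)) (hz : z ∈ Dom)
    (y : EuclideanSpace ℝ (Fin d)) (hy : y ∈ Dom)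
    (hmin : ∀ u ∈ Dom, h y + breg ψ ψ' y z ≤ h u + breg ψ ψ' u z) :
    ∃ gy : EuclideanSpace ℝ (Fin d),
      (∀ v ∈ Dom, h y + ⟪gy, v - y⟫ ≤ h v) ∧
      ∀ x ∈ Dom, ⟪y - x, gy⟫ ≤ breg ψ ψ' x z - breg ψ ψ' x y - breg ψ ψ' y z := by
  refine ⟨ψ' z - ψ' y, ?_, ?_⟩
  · intro v hv
    set w := v - y with hw
    -- key: ⟪ψ' z, w⟫ - ⟪ψ' y, w⟫ ≤ h v - h y
    have key : ⟪ψ' z, w⟫ - (h v - h y) ≤ ⟪ψ' y, w⟫ := by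
      refine ge_of_tendsto (slope_tendsto ψ (ψ' y) y w (hψ y)) ?_
      filter_upwards [Ioc_mem_nhdsGT_of_mem (Set.left_mem_Ico.2 one_pos)] with t ht
      obtain ⟨ht0, ht1⟩ := ht
      have hu : y + t • w ∈ Dom := by
        have := hDconv hy hv (by linarith : (0:ℝ) ≤ 1 - t) ht0.le (by ring)
        convert this using 1
        simp [hw, smul_sub]
        module
      have h1 := hmin _ hu
      have h2 : h (y + t • w) ≤ (1 - t) * h y + t * h v := by
        have := hconv.2 hy hv (by linarith : (0:ℝ) ≤ 1 - t) ht0.le (by ring)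
        convert this using 2
        rfl
        simp [hw, smul_sub]
        module
        all_goals rfl
      have hip : ⟪ψ' z, (y + t • w) - z⟫ = ⟪ψ' z, y - z⟫ + t * ⟪ψ' z, w⟫ := by
        rw [show (y + t • w) - z = (y - z) + t • w by abel, inner_add_right,
          real_inner_smul_right]
      have hbr : breg ψ ψ' y z - breg ψ ψ' (y + t • w) z
          = ψ y - ψ (y + t • w) + t * ⟪ψ' z, w⟫ := by
        simp only [breg, hip]; ring
      -- from h1, h2: t*⟪ψ' z, w⟫ - (ψ (y+t•w) - ψ y) ≤ t * (h v - h y)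
      have h3 : t * ⟪ψ' z, w⟫ - (ψ (y + t • w) - ψ y) ≤ t * (h v - h y) := by
        nlinarith [h1, h2, hbr]
      rw [le_div_iff₀ ht0]
      nlinarith [h3]
    have : ⟪ψ' z - ψ' y, v - y⟫ = ⟪ψ' z, w⟫ - ⟪ψ' y, w⟫ := by
      rw [inner_sub_left]
    linarith [key, this.le, this.ge]
  · intro x hx
    have hid : breg ψ ψ' x z - breg ψ ψ' x y - breg ψ ψ' y z
        = ⟪ψ' y, x - y⟫ - ⟪ψ' z, x - y⟫ := by
      simp only [breg]
      have h1 : ⟪ψ' z, x - z⟫ = ⟪ψ' z, x - y⟫ + ⟪ψ' z, y - z⟫ := by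
        rw [← inner_add_right]; congr 1; abel
      rw [h1]; ring
    have h2 : ⟪y - x, ψ' z - ψ' y⟫ = ⟪ψ' y, x - y⟫ - ⟪ψ' z, x - y⟫ := by
      rw [show y - x = -(x - y) by abel, inner_neg_left, inner_sub_right,
        real_inner_comm (x - y) (ψ' z), real_inner_comm (x - y) (ψ' y)]
      ring
    rw [hid, h2]
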